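/- Let S be the numerical semigroup generated by positive integers n_1,...,n_k with gcd(n_1,...,n_k)=1, let T(S)={g_1,...,g_t} be its set of pseudo-Frobenius numbers, and let f be an odd integer with f ≥ 3g(S)+1. Let T be the numerical semigroup generated by 2n_1,...,2n_k, f−2g_1,...,f−2g_t. Then the Frobenius number of T equals f, and T is symmetric; that is, for every integer z, z ∉ T if and only if f − z ∈ T. -/

import Mathlib

/-- Membership of an integer in an additive submonoid of `ℕ`, viewed inside `ℤ`
via the inclusion `ℕ ⊆ ℤ`. -/
def AddSubmonoid.zmem (S : AddSubmonoid ℕ) (x : ℤ) : Prop :=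
  ∃ n : ℕ, n ∈ S ∧ (n : ℤ) = x

/-- The Frobenius number `g(S) = max {x ∈ ℤ : x ∉ S}` of a numerical semigroup. -/
noncomputable def frobeniusNumber (S : AddSubmonoid ℕ) : ℤ :=
  sSup {x : ℤ | ¬ S.zmem x}

/-- The set of pseudo-Frobenius numbers
`T(S) = {x ∈ ℤ \ S : x + s ∈ S for all s ∈ S, s ≠ 0}`. -/
def pseudoFrobeniusSet (S : AddSubmonoid ℕ) : Set ℤ :=
  {x : ℤ | ¬ S.zmem x ∧ ∀ s ∈ S, s ≠ 0 → S.zmem (x + s)}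

/-- Bézout's lemma for finite sets. -/
private lemma finset_gcd_bezout {ι : Type*} [DecidableEq ι] (s : Finset ι) (n : ι → ℕ) :
    ∃ c : ι → ℤ, ∑ i ∈ s, c i * n i = s.gcd n := by
  induction s using Finset.induction_on with
  | empty => exact ⟨0, by simp⟩
  | @insert a s ha ih =>
    obtain ⟨c, hc⟩ := ih
    refine ⟨fun i => if i = a then Nat.gcdA (n a) (s.gcd n) else Nat.gcdB (n a) (s.gcd n) * c i,
      ?_⟩
    rw [Finset.sum_insert ha]
    beta_reduce
    rw [if_pos rfl]
    have hsum : ∑ i ∈ s, (if i = a then Nat.gcdA (n a) (s.gcd n)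
        else Nat.gcdB (n a) (s.gcd n) * c i) * (n i : ℤ)
        = Nat.gcdB (n a) (s.gcd n) * ∑ i ∈ s, c i * n i := by
      rw [Finset.mul_sum]
      refine Finset.sum_congr rfl fun i hi => ?_
      rw [if_neg (by rintro rfl; exact ha hi)]
      ring
    rw [hsum, hc]
    have hins : ((((insert a s).gcd n : ℕ)) : ℤ)
        = (n a : ℤ) * (n a).gcdA (s.gcd n) + (((s.gcd n : ℕ)) : ℤ) * (n a).gcdB (s.gcd n) := by
      rw [Finset.gcd_insert]
      rw [show GCDMonoid.gcd (n a) (s.gcd n) = Nat.gcd (n a) (s.gcd n) from rfl]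
      exact_mod_cast Nat.gcd_eq_gcd_ab (n a) (s.gcd n)
    rw [hins]
    ring

/-- with `T = ⟨2n₁,…,2n_k, f−2g₁,…,f−2g_t⟩` as in the half
construction, the Frobenius number of `T` equals `f`, and `T` is symmetric:
for every integer `z`, `z ∉ T ↔ f − z ∈ T`. -/
theorem stmt1 (k : ℕ) (hk : 0 < k) (n : Fin k → ℕ) (hn : ∀ i, 0 < n i)
    (hgcd : Finset.univ.gcd n = 1)
    (S : AddSubmonoid ℕ) (hS : S = AddSubmonoid.closure (Set.range n))
    (t : ℕ) (g : Fin t → ℤ) (hg : pseudoFrobeniusSet S = Set.range g)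
    (f : ℤ) (hodd : Odd f) (hf : 3 * frobeniusNumber S + 1 ≤ f)
    (T : AddSubmonoid ℕ)
    (hT : T = AddSubmonoid.closure
      (Set.range (fun i => 2 * n i) ∪ Set.range (fun j => (f - 2 * g j).toNat))) :
    frobeniusNumber T = f ∧ ∀ z : ℤ, ¬ T.zmem z ↔ T.zmem (f - z) := by
  classical
  obtain ⟨c0, hc0⟩ := hodd
  -- basic facts about zmem
  have hzmem_nonneg : ∀ x : ℤ, S.zmem x → 0 ≤ x := by rintro x ⟨a, _, rfl⟩; positivity
  have hzmem_add : ∀ x y : ℤ, S.zmem x → S.zmem y → S.zmem (x + y) := by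
    rintro x y ⟨a, ha, rfl⟩ ⟨b, hb, rfl⟩
    exact ⟨a + b, S.add_mem ha hb, by push_cast; ring⟩
  have hzmem0 : S.zmem 0 := ⟨0, S.zero_mem, rfl⟩
  have hgen_mem : ∀ i, n i ∈ S := fun i => hS ▸ AddSubmonoid.subset_closure ⟨i, rfl⟩
  have hmul_mem : ∀ (a : ℕ) {x : ℕ}, x ∈ S → a * x ∈ S := by
    intro a x hx
    simpa [nsmul_eq_mul] using S.nsmul_mem hx a
  -- cofiniteness of S
  obtain ⟨c, hc⟩ := finset_gcd_bezout Finset.univ n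
  rw [hgcd] at hc
  push_cast at hc
  set P : ℕ := ∑ i, (c i).toNat * n i with hP
  set Q : ℕ := ∑ i, (-(c i)).toNat * n i with hQ
  have hPQ : P = Q + 1 := by
    have key : (P : ℤ) - (Q : ℤ) = 1 := by
      rw [hP, hQ]
      push_cast
      rw [← Finset.sum_sub_distrib]
      rw [← hc]
      push_cast
      refine Finset.sum_congr rfl fun i _ => ?_
      have h1 : ((c i).toNat : ℤ) - ((-(c i)).toNat : ℤ) = c i := by omega
      rw [← sub_mul, h1]
    omega
  have hPmem : P ∈ S := S.sum_mem fun i _ => hmul_mem _ (hgen_mem i)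
  have hQmem : Q ∈ S := S.sum_mem fun i _ => hmul_mem _ (hgen_mem i)
  have hbig : ∀ m : ℕ, Q * Q ≤ m → m ∈ S := by
    intro m hm
    by_cases hQ0 : Q = 0
    · have h1 : (1 : ℕ) ∈ S := by
        have := hPmem; rw [hPQ, hQ0] at this; simpa using this
      have : m * 1 ∈ S := hmul_mem m h1
      simpa using this
    · have hQpos : 0 < Q := Nat.pos_of_ne_zero hQ0
      obtain ⟨q, r, hm2, hrQ⟩ : ∃ q r, m = Q * q + r ∧ r < Q :=
        ⟨m / Q, m % Q, (Nat.div_add_mod m Q).symm, Nat.mod_lt _ hQpos⟩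
      have hQq : Q ≤ q := by nlinarith
      have hrq : r ≤ q := le_of_lt (lt_of_lt_of_le hrQ hQq)
      have heq : m = (q - r) * Q + r * P := by
        rw [hPQ, hm2]
        zify [hrq]
        ring
      rw [heq]
      exact S.add_mem (hmul_mem _ hQmem) (hmul_mem _ hPmem)
  -- frobenius facts
  have hne : Set.Nonempty {x : ℤ | ¬ S.zmem x} := ⟨-1, by rintro ⟨m, _, hm⟩; omega⟩
  have hbdd : BddAbove {x : ℤ | ¬ S.zmem x} := by
    refine ⟨(Q * Q : ℕ), fun x hx => ?_⟩
    by_contra h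
    push_neg at h
    exact hx ⟨x.toNat, hbig _ (by omega), by omega⟩
  have hle : ∀ x : ℤ, ¬ S.zmem x → x ≤ frobeniusNumber S := fun x hx => le_csSup hbdd hx
  have hgt : ∀ x : ℤ, frobeniusNumber S < x → S.zmem x := by
    intro x h
    by_contra hx
    exact absurd (hle x hx) (not_le.2 h)
  have hgnotmem : ¬ S.zmem (frobeniusNumber S) := Int.csSup_mem hne hbdd
  have hgS1 : -1 ≤ frobeniusNumber S := hle _ (by rintro ⟨m, _, hm⟩; omega)
  have hpseudo : ∀ j, g j ∈ pseudoFrobeniusSet S := fun j => hg ▸ ⟨j, rfl⟩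
  have hpseudo_le : ∀ j, g j ≤ frobeniusNumber S := fun j => hle _ (hpseudo j).1
  have hgenpos : ∀ j, 0 ≤ f - 2 * g j := by
    intro j; have := hpseudo_le j; omega
  -- every gap is dominated by a pseudo-Frobenius number
  have hreach : ∀ x : ℤ, ¬ S.zmem x → ∃ j, ∃ s : ℕ, s ∈ S ∧ g j = x + s := by
    intro x hx
    set A := {y : ℤ | ¬ S.zmem y ∧ ∃ s : ℕ, s ∈ S ∧ y = x + s} with hA
    have hAne : A.Nonempty := ⟨x, hx, 0, S.zero_mem, by simp⟩
    have hAbdd : BddAbove A := hbdd.mono fun y hy => hy.1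
    obtain ⟨hy1, s, hs, hys⟩ := Int.csSup_mem hAne hAbdd
    have hps : sSup A ∈ pseudoFrobeniusSet S := by
      refine ⟨hy1, ?_⟩
      intro s' hs' hs'0
      by_contra hcon
      have hmem : sSup A + s' ∈ A :=
        ⟨hcon, s + s', S.add_mem hs hs', by rw [hys]; push_cast; ring⟩
      have hle' := le_csSup hAbdd hmem
      have : 1 ≤ (s' : ℤ) := by exact_mod_cast Nat.one_le_iff_ne_zero.2 hs'0
      omega
    rw [hg] at hps
    obtain ⟨j, hj⟩ := hps
    exact ⟨j, s, hs, by rw [hj, hys]⟩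
  -- doubling
  have hdouble : ∀ b : ℕ, b ∈ S → 2 * b ∈ T := by
    intro b hb
    rw [hS] at hb
    rw [hT]
    induction hb using AddSubmonoid.closure_induction with
    | mem x hx =>
      obtain ⟨i, rfl⟩ := hx
      exact AddSubmonoid.subset_closure (Or.inl ⟨i, rfl⟩)
    | zero => simpa using (AddSubmonoid.closure _).zero_mem
    | add x y hx hy ihx ihy =>
      rw [Nat.mul_add]
      exact (AddSubmonoid.closure _).add_mem ihx ihy
  have hgenT : ∀ j, (f - 2 * g j).toNat ∈ T :=
    fun j => hT ▸ AddSubmonoid.subset_closure (Or.inr ⟨j, rfl⟩)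
  -- the characterization of membership in T
  have hchar : ∀ z : ℤ, T.zmem z ↔
      ((∃ m : ℤ, z = 2 * m ∧ S.zmem m) ∨ (∃ m : ℤ, z = f - 2 * m ∧ ¬ S.zmem m)) := by
    intro z
    constructor
    · rintro ⟨w, hw, rfl⟩
      rw [hT] at hw
      induction hw using AddSubmonoid.closure_induction with
      | mem x hx =>
        rcases hx with ⟨i, rfl⟩ | ⟨j, rfl⟩
        · exact Or.inl ⟨n i, by push_cast; ring, ⟨n i, hgen_mem i, rfl⟩⟩
        · refine Or.inr ⟨g j, ?_, (hpseudo j).1⟩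
          rw [Int.toNat_of_nonneg (hgenpos j)]
      | zero => exact Or.inl ⟨0, by simp, hzmem0⟩
      | add x y hx hy ihx ihy =>
        rcases ihx with ⟨m1, e1, h1⟩ | ⟨m1, e1, h1⟩ <;>
          rcases ihy with ⟨m2, e2, h2⟩ | ⟨m2, e2, h2⟩
        · exact Or.inl ⟨m1 + m2, by push_cast; omega, hzmem_add _ _ h1 h2⟩
        · refine Or.inr ⟨m2 - m1, by push_cast; omega, fun hcon => h2 ?_⟩
          have := hzmem_add _ _ hcon h1
          simpa using this
        · refine Or.inr ⟨m1 - m2, by push_cast; omega, fun hcon => h1 ?_⟩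
          have := hzmem_add _ _ hcon h2
          simpa using this
        · refine Or.inl ⟨f - m1 - m2, by push_cast; omega, hgt _ ?_⟩
          have hb1 := hle _ h1
          have hb2 := hle _ h2
          omega
    · rintro (⟨m, rfl, hm⟩ | ⟨m, rfl, hm⟩)
      · obtain ⟨a, ha, rfl⟩ := hm
        exact ⟨2 * a, hdouble a ha, by push_cast; ring⟩
      · obtain ⟨j, s, hs, hj⟩ := hreach m hm
        refine ⟨(f - 2 * g j).toNat + 2 * s, T.add_mem (hgenT j) (hdouble s hs), ?_⟩
        push_cast
        rw [Int.toNat_of_nonneg (hgenpos j)]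
        omega
  -- conclusion
  have hfnot : ¬ T.zmem f := by
    rw [hchar]
    rintro (⟨m, hm, _⟩ | ⟨m, hm, hmem⟩)
    · omega
    · have hm0 : m = 0 := by omega
      exact hmem (hm0 ▸ hzmem0)
  constructor
  · refine IsGreatest.csSup_eq ⟨hfnot, ?_⟩
    intro z hz
    by_contra h
    push_neg at h
    apply hz
    rw [hchar]
    rcases Int.even_or_odd z with ⟨m, hm⟩ | ⟨m, hm⟩
    · exact Or.inl ⟨m, by omega, hgt m (by omega)⟩
    · refine Or.inr ⟨c0 - m, by omega, fun hcon => ?_⟩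
      have := hzmem_nonneg _ hcon
      omega
  · intro z
    rw [hchar, hchar]
    rcases Int.even_or_odd z with ⟨m, hm⟩ | ⟨m, hm⟩
    · constructor
      · intro hnz
        refine Or.inr ⟨m, by omega, fun hcon => hnz (Or.inl ⟨m, by omega, hcon⟩)⟩
      · rintro (⟨m', e, hmem⟩ | ⟨m', e, hmem⟩) hz
        · omega
        · have hm' : m' = m := by omega
          rcases hz with ⟨m'', e'', h''⟩ | ⟨m'', e'', h''⟩
          · have : m'' = m := by omega
            exact hmem (hm'.symm ▸ this ▸ h'')
          · omega
    · constructor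
      · intro hnz
        by_contra hcon
        rw [not_or] at hcon
        obtain ⟨hc1, _⟩ := hcon
        apply hc1
        refine ⟨c0 - m, by omega, ?_⟩
        by_contra hzm
        exact hnz (Or.inr ⟨c0 - m, by omega, hzm⟩)
      · rintro (⟨m', e, hmem⟩ | ⟨m', e, hmem⟩)
        · rintro (⟨m'', e'', h''⟩ | ⟨m'', e'', h''⟩)
          · omega
          · have : m'' = m' := by omega
            exact h'' (this ▸ hmem)
        · omega
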